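/- arXiv:1808.04923 — 5 statements merged into one kernel-verified Lean document; each statement's English description precedes it below -/
import Mathlib

section
/- Fix a positive integer n and an integer a with 0 < a ≤ n. Set i = ⌊n/a⌋, let d be the largest divisor of a all of whose prime factors are at most i, let ℓ = a/d, and set t = ⌊n/ℓ⌋. Then the map x ↦ ℓ·x is a graph isomorphism from the connected component of d in the divisor graph of {d, d+1, …, t} onto the connected component of a in the divisor graph of {a, a+1, …, n}, sending the vertex d to the vertex a. -/
/-- The divisor graph of a finite set `T` of natural numbers: vertices are elements of
`T`, and two distinct vertices are adjacent iff one divides the other. -/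
def divisorGraph (T : Finset ℕ) : SimpleGraph {x : ℕ // x ∈ T} where
  Adj x y := (x : ℕ) ≠ (y : ℕ) ∧ ((x : ℕ) ∣ (y : ℕ) ∨ (y : ℕ) ∣ (x : ℕ))
  symm := ⟨fun _ _ h => ⟨h.1.symm, h.2.symm⟩⟩
  loopless := ⟨fun _ h => h.1 rfl⟩

/-- The connected component of the vertex `v` in the divisor graph of `T`, viewed as the
induced subgraph on the set of vertices reachable from `v`. -/
def componentGraph (T : Finset ℕ) (v : {x : ℕ // x ∈ T}) :
    SimpleGraph {w : {x : ℕ // x ∈ T} | (divisorGraph T).Reachable v w} :=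
  (divisorGraph T).induce {w | (divisorGraph T).Reachable v w}

/-- Auxiliary: walk induction for transporting a predicate along reachability. -/
lemma walk_transport {V : Type*} {G : SimpleGraph V} {P : V → Prop}
    (step : ∀ x y, P x → G.Adj x y → P y) :
    ∀ {x y : V} (_ : G.Walk x y), P x → P y := by
  intro x y p
  induction p with
  | nil => exact id
  | cons h _ ih => exact fun hx => ih (step _ _ hx h)

/-- With `i = ⌊n/a⌋`, `d` the largest `i`-smooth divisor of `a`, `ℓ = a/d` and
`t = ⌊n/ℓ⌋`, the map `x ↦ ℓ·x` is a graph isomorphism from the connected component of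
`d` in the divisor graph of `{d, …, t}` onto the connected component of `a` in the
divisor graph of `{a, …, n}` (sending the vertex `d` to the vertex `a`). -/
theorem component_isomorphism (n a i d ℓ t : ℕ)
    (ha : 0 < a) (han : a ≤ n)
    (hi : i = n / a)
    (hda : d ∣ a) (hdsmooth : ∀ p : ℕ, p.Prime → p ∣ d → p ≤ i)
    (hdmax : ∀ d' : ℕ, d' ∣ a → (∀ p : ℕ, p.Prime → p ∣ d' → p ≤ i) → d' ≤ d)
    (hℓ : ℓ = a / d) (ht : t = n / ℓ)
    (hdt : d ∈ Finset.Icc d t) (han' : a ∈ Finset.Icc a n) :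
    ∃ e : componentGraph (Finset.Icc d t) ⟨d, hdt⟩ ≃g
          componentGraph (Finset.Icc a n) ⟨a, han'⟩,
      ∀ v, ((e v).1.1 : ℕ) = ℓ * (v.1.1 : ℕ) := by
  have hd0 : 0 < d := Nat.pos_of_dvd_of_pos hda ha
  have hℓ0 : 0 < ℓ := hℓ ▸ Nat.div_pos (Nat.le_of_dvd ha hda) hd0
  have hℓd : ℓ * d = a := by rw [hℓ]; exact Nat.div_mul_cancel hda
  -- every prime factor of ℓ is > i
  have hℓrough : ∀ p : ℕ, p.Prime → p ∣ ℓ → i < p := by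
    intro p hp hpl
    by_contra hle
    push_neg at hle
    have hdpa : d * p ∣ a := by
      obtain ⟨c, hc⟩ := hpl
      exact ⟨c, by rw [← hℓd, hc]; ring⟩
    have hsm : ∀ p' : ℕ, p'.Prime → p' ∣ d * p → p' ≤ i := by
      intro p' hp' hdp
      rcases (Nat.Prime.dvd_mul hp').mp hdp with h | h
      · exact hdsmooth p' hp' h
      · rw [(Nat.prime_dvd_prime_iff_eq hp' hp).mp h]; exact hle
    have hle' := hdmax (d * p) hdpa hsm
    nlinarith [hp.two_le]
  -- membership lemmas (unconditional)
  have memQ : ∀ x : {x : ℕ // x ∈ Finset.Icc d t}, ℓ * (x : ℕ) ∈ Finset.Icc a n := by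
    intro x
    obtain ⟨h1, h2⟩ := Finset.mem_Icc.mp x.2
    rw [Finset.mem_Icc]
    constructor
    · rw [← hℓd]; exact Nat.mul_le_mul_left ℓ h1
    · calc ℓ * (x : ℕ) ≤ ℓ * t := Nat.mul_le_mul_left ℓ h2
        _ = ℓ * (n / ℓ) := by rw [ht]
        _ ≤ n := Nat.mul_div_le n ℓ
  have memP : ∀ w : {x : ℕ // x ∈ Finset.Icc a n}, (w : ℕ) / ℓ ∈ Finset.Icc d t := by
    intro w
    obtain ⟨h1, h2⟩ := Finset.mem_Icc.mp w.2
    rw [Finset.mem_Icc]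
    constructor
    · have h3 : d = a / ℓ := by rw [← hℓd, Nat.mul_div_cancel_left d hℓ0]
      rw [h3]
      exact Nat.div_le_div_right h1
    · rw [ht]; exact Nat.div_le_div_right h2
  -- forward reachability transfer
  have fwd : ∀ w : {x : ℕ // x ∈ Finset.Icc d t},
      (divisorGraph (Finset.Icc d t)).Reachable ⟨d, hdt⟩ w →
      (divisorGraph (Finset.Icc a n)).Reachable ⟨a, han'⟩ ⟨ℓ * (w : ℕ), memQ w⟩ := by
    have step : ∀ x y : {x : ℕ // x ∈ Finset.Icc d t},
        (divisorGraph (Finset.Icc a n)).Reachable ⟨a, han'⟩ ⟨ℓ * (x : ℕ), memQ x⟩ →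
        (divisorGraph (Finset.Icc d t)).Adj x y →
        (divisorGraph (Finset.Icc a n)).Reachable ⟨a, han'⟩ ⟨ℓ * (y : ℕ), memQ y⟩ := by
      intro x y hx hadj
      obtain ⟨hne, hdvd⟩ := hadj
      refine hx.trans (SimpleGraph.Adj.reachable ?_)
      refine ⟨?_, ?_⟩
      · simp only [ne_eq, mul_right_inj' hℓ0.ne']
        exact hne
      · rcases hdvd with h | h
        · exact Or.inl (mul_dvd_mul_left ℓ h)
        · exact Or.inr (mul_dvd_mul_left ℓ h)
    intro w hw
    obtain ⟨p⟩ := hw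
    have base : (divisorGraph (Finset.Icc a n)).Reachable ⟨a, han'⟩
        ⟨ℓ * ((⟨d, hdt⟩ : {x : ℕ // x ∈ Finset.Icc d t}) : ℕ), memQ ⟨d, hdt⟩⟩ := by
      have heq : (⟨ℓ * ((⟨d, hdt⟩ : {x : ℕ // x ∈ Finset.Icc d t}) : ℕ),
          memQ ⟨d, hdt⟩⟩ : {x : ℕ // x ∈ Finset.Icc a n}) = ⟨a, han'⟩ :=
        Subtype.ext hℓd
      rw [heq]
    exact walk_transport step p base
  -- backward reachability transfer
  have bwd : ∀ w : {x : ℕ // x ∈ Finset.Icc a n},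
      (divisorGraph (Finset.Icc a n)).Reachable ⟨a, han'⟩ w →
      ℓ ∣ (w : ℕ) ∧ (divisorGraph (Finset.Icc d t)).Reachable ⟨d, hdt⟩ ⟨(w : ℕ) / ℓ, memP w⟩ := by
    have step : ∀ x y : {x : ℕ // x ∈ Finset.Icc a n},
        (ℓ ∣ (x : ℕ) ∧ (divisorGraph (Finset.Icc d t)).Reachable ⟨d, hdt⟩ ⟨(x : ℕ) / ℓ, memP x⟩) →
        (divisorGraph (Finset.Icc a n)).Adj x y →
        (ℓ ∣ (y : ℕ) ∧ (divisorGraph (Finset.Icc d t)).Reachable ⟨d, hdt⟩ ⟨(y : ℕ) / ℓ, memP y⟩) := by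
      intro x y hx hadj
      obtain ⟨hdx, hrx⟩ := hx
      obtain ⟨hne, hdvd⟩ := hadj
      have hxa : a ≤ (x : ℕ) := (Finset.mem_Icc.mp x.2).1
      have hya : a ≤ (y : ℕ) := (Finset.mem_Icc.mp y.2).1
      have hyn : (y : ℕ) ≤ n := (Finset.mem_Icc.mp y.2).2
      have hxn : (x : ℕ) ≤ n := (Finset.mem_Icc.mp x.2).2
      have hdy : ℓ ∣ (y : ℕ) := by
        rcases hdvd with h | h
        · exact hdx.trans h
        · -- y divides x; the cofactor q is ≤ i hence coprime to ℓ
          set q := (x : ℕ) / (y : ℕ) with hq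
          have hqy : (y : ℕ) * q = (x : ℕ) := Nat.mul_div_cancel' h
          have hq0 : 0 < q := by
            rcases Nat.eq_zero_or_pos q with h0 | h0
            · exfalso; rw [h0, mul_zero] at hqy; omega
            · exact h0
          have hqi : q ≤ i := by
            rw [hi]
            rw [Nat.le_div_iff_mul_le ha]
            calc q * a ≤ q * (y : ℕ) := Nat.mul_le_mul_left q hya
              _ = (y : ℕ) * q := mul_comm _ _
              _ = (x : ℕ) := hqy
              _ ≤ n := hxn
          have hcop : Nat.Coprime ℓ q := by
            by_contra hc
            obtain ⟨p, hp, hpl, hpq⟩ := Nat.Prime.not_coprime_iff_dvd.mp hc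
            have h1 := hℓrough p hp hpl
            have h2 : p ≤ q := Nat.le_of_dvd hq0 hpq
            omega
          have : ℓ ∣ (y : ℕ) * q := by rw [hqy]; exact hdx
          exact hcop.dvd_of_dvd_mul_right this
      refine ⟨hdy, hrx.trans (SimpleGraph.Adj.reachable ?_)⟩
      refine ⟨?_, ?_⟩
      · intro hEq
        apply hne
        have hEq' : (x : ℕ) / ℓ = (y : ℕ) / ℓ := hEq
        have : ℓ * ((x : ℕ) / ℓ) = ℓ * ((y : ℕ) / ℓ) := by rw [hEq']
        rw [Nat.mul_div_cancel' hdx, Nat.mul_div_cancel' hdy] at this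
        exact this
      · have hx' : ℓ * ((x : ℕ) / ℓ) = (x : ℕ) := Nat.mul_div_cancel' hdx
        have hy' : ℓ * ((y : ℕ) / ℓ) = (y : ℕ) := Nat.mul_div_cancel' hdy
        rcases hdvd with h | h
        · refine Or.inl ?_
          rw [← hx', ← hy'] at h
          exact (mul_dvd_mul_iff_left hℓ0.ne').mp h
        · refine Or.inr ?_
          rw [← hx', ← hy'] at h
          exact (mul_dvd_mul_iff_left hℓ0.ne').mp h
    intro w hw
    obtain ⟨p⟩ := hw
    have base : ℓ ∣ ((⟨a, han'⟩ : {x : ℕ // x ∈ Finset.Icc a n}) : ℕ) ∧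
        (divisorGraph (Finset.Icc d t)).Reachable ⟨d, hdt⟩
          ⟨((⟨a, han'⟩ : {x : ℕ // x ∈ Finset.Icc a n}) : ℕ) / ℓ, memP ⟨a, han'⟩⟩ := by
      refine ⟨⟨d, hℓd.symm⟩, ?_⟩
      have heq : (⟨((⟨a, han'⟩ : {x : ℕ // x ∈ Finset.Icc a n}) : ℕ) / ℓ,
          memP ⟨a, han'⟩⟩ : {x : ℕ // x ∈ Finset.Icc d t}) = ⟨d, hdt⟩ := by
        apply Subtype.ext
        show a / ℓ = d
        rw [← hℓd, Nat.mul_div_cancel_left d hℓ0]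
      rw [heq]
    exact walk_transport step p base
  -- construct the isomorphism
  refine ⟨⟨⟨fun v => ⟨⟨ℓ * (v.1 : ℕ), memQ v.1⟩, fwd v.1 v.2⟩,
      fun w => ⟨⟨(w.1 : ℕ) / ℓ, memP w.1⟩, (bwd w.1 w.2).2⟩, ?_, ?_⟩, ?_⟩, ?_⟩
  · intro v
    apply Subtype.ext
    apply Subtype.ext
    show ℓ * (v.1 : ℕ) / ℓ = (v.1 : ℕ)
    exact Nat.mul_div_cancel_left _ hℓ0
  · intro w
    apply Subtype.ext
    apply Subtype.ext
    show ℓ * ((w.1 : ℕ) / ℓ) = (w.1 : ℕ)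
    exact Nat.mul_div_cancel' (bwd w.1 w.2).1
  · intro v v'
    show (ℓ * (v.1 : ℕ) ≠ ℓ * (v'.1 : ℕ) ∧
        (ℓ * (v.1 : ℕ) ∣ ℓ * (v'.1 : ℕ) ∨ ℓ * (v'.1 : ℕ) ∣ ℓ * (v.1 : ℕ))) ↔
      ((v.1 : ℕ) ≠ (v'.1 : ℕ) ∧ ((v.1 : ℕ) ∣ (v'.1 : ℕ) ∨ (v'.1 : ℕ) ∣ (v.1 : ℕ)))
    constructor
    · rintro ⟨h1, h2⟩
      refine ⟨fun hEq => h1 (by rw [hEq]), ?_⟩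
      rcases h2 with h | h
      · exact Or.inl ((mul_dvd_mul_iff_left hℓ0.ne').mp h)
      · exact Or.inr ((mul_dvd_mul_iff_left hℓ0.ne').mp h)
    · rintro ⟨h1, h2⟩
      refine ⟨by simpa [ne_eq, mul_right_inj' hℓ0.ne'] using h1, ?_⟩
      rcases h2 with h | h
      · exact Or.inl (mul_dvd_mul_left ℓ h)
      · exact Or.inr (mul_dvd_mul_left ℓ h)
  · intro v
    rfl
end

section
/- Let p be a prime and let d and t be positive integers with d ≤ t. Suppose that every integer in the connected component of p·d in the divisor graph of {p·d, p·d+1, …, p·t} is divisible by p. Then every integer in the connected component of p²·d in the divisor graph of {p²·d, p²·d+1, …, p²·t} is divisible by p². -/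
/-- If every integer in the connected component of `p·d` in the divisor graph of
`{p·d, …, p·t}` is divisible by `p`, then every integer in the connected component of
`p²·d` in the divisor graph of `{p²·d, …, p²·t}` is divisible by `p²`. -/
theorem component_prime_power_divisibility (p d t : ℕ) (hp : p.Prime)
    (hd : 0 < d) (hdt : d ≤ t)
    (hmem : p * d ∈ Finset.Icc (p * d) (p * t))
    (hmem2 : p ^ 2 * d ∈ Finset.Icc (p ^ 2 * d) (p ^ 2 * t))
    (h : ∀ x : {x : ℕ // x ∈ Finset.Icc (p * d) (p * t)},
      (divisorGraph (Finset.Icc (p * d) (p * t))).Reachable ⟨p * d, hmem⟩ x →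
        p ∣ (x : ℕ)) :
    ∀ x : {x : ℕ // x ∈ Finset.Icc (p ^ 2 * d) (p ^ 2 * t)},
      (divisorGraph (Finset.Icc (p ^ 2 * d) (p ^ 2 * t))).Reachable ⟨p ^ 2 * d, hmem2⟩ x →
        p ^ 2 ∣ (x : ℕ) := by
  have hp0 : 0 < p := hp.pos
  set G1 := divisorGraph (Finset.Icc (p * d) (p * t)) with hG1
  set G2 := divisorGraph (Finset.Icc (p ^ 2 * d) (p ^ 2 * t)) with hG2
  suffices H : ∀ (x y : {x : ℕ // x ∈ Finset.Icc (p ^ 2 * d) (p ^ 2 * t)})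
      (w : G2.Walk x y),
      (∃ (k : ℕ) (hk : p * k ∈ Finset.Icc (p * d) (p * t)),
        (y : ℕ) = p ^ 2 * k ∧ G1.Reachable ⟨p * d, hmem⟩ ⟨p * k, hk⟩) →
      ∃ (k : ℕ) (hk : p * k ∈ Finset.Icc (p * d) (p * t)),
        (x : ℕ) = p ^ 2 * k ∧ G1.Reachable ⟨p * d, hmem⟩ ⟨p * k, hk⟩ by
    intro x hx
    obtain ⟨w⟩ := hx.symm
    obtain ⟨k, _, hxk, _⟩ :=
      H x ⟨p ^ 2 * d, hmem2⟩ w ⟨d, hmem, rfl, SimpleGraph.Reachable.refl _⟩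
    exact ⟨k, hxk⟩
  intro x y w
  induction w with
  | nil => exact fun hbase => hbase
  | @cons u v _ hadj w ih =>
    intro hbase
    obtain ⟨k, hk, hv, hreach⟩ := ih hbase
    have hkb := Finset.mem_Icc.mp hk
    have hkd : d ≤ k := Nat.le_of_mul_le_mul_left hkb.1 hp0
    have hkt : k ≤ t := Nat.le_of_mul_le_mul_left hkb.2 hp0
    have hk0 : 0 < k := lt_of_lt_of_le hd hkd
    have hub := Finset.mem_Icc.mp u.2
    have hune : (u : ℕ) ≠ (v : ℕ) := hadj.1
    have hp2d : 0 < p ^ 2 * d := by positivity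
    have hu0 : (u : ℕ) ≠ 0 := by
      have := hub.1
      omega
    have hdvd : p ^ 2 ∣ (u : ℕ) := by
      rcases hadj.2 with hq | hq
      · -- u ∣ v = p^2 * k
        by_contra hnd
        set c := ordCompl[p] (u : ℕ) with hc
        have hcd : c ∣ (u : ℕ) := Nat.ordCompl_dvd _ _
        have hpc : ¬ p ∣ c := Nat.not_dvd_ordCompl hp hu0
        have hck : c ∣ k := by
          have h1 : c ∣ p ^ 2 * k := hcd.trans (hv ▸ hq)
          exact (((hp.coprime_iff_not_dvd.mpr hpc).symm).pow_right 2).dvd_of_dvd_mul_left h1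
        have he : (u : ℕ).factorization p ≤ 1 := by
          by_contra he
          exact hnd ((hp.pow_dvd_iff_le_factorization hu0).mpr (by omega))
        have hcl : p * d ≤ c := by
          have h1 : p ^ ((u : ℕ).factorization p) * c = (u : ℕ) :=
            Nat.ordProj_mul_ordCompl_eq_self _ _
          have h2 : p ^ ((u : ℕ).factorization p) ≤ p := by
            calc p ^ ((u : ℕ).factorization p) ≤ p ^ 1 := Nat.pow_le_pow_right hp0 he
            _ = p := pow_one p
          have h3 : p ^ 2 * d ≤ p * c := by
            calc p ^ 2 * d ≤ (u : ℕ) := hub.1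
            _ = p ^ ((u : ℕ).factorization p) * c := h1.symm
            _ ≤ p * c := Nat.mul_le_mul_right c h2
          have h4 : p * (p * d) ≤ p * c := by
            have : p * (p * d) = p ^ 2 * d := by ring
            omega
          exact Nat.le_of_mul_le_mul_left h4 hp0
        have hcmem : c ∈ Finset.Icc (p * d) (p * t) := by
          refine Finset.mem_Icc.mpr ⟨hcl, ?_⟩
          calc c ≤ k := Nat.le_of_dvd hk0 hck
          _ ≤ t := hkt
          _ ≤ p * t := Nat.le_mul_of_pos_left t hp0
        have hadj2 : G1.Adj ⟨p * k, hk⟩ ⟨c, hcmem⟩ := by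
          refine ⟨?_, Or.inr (hck.mul_left p)⟩
          intro hce
          have hce' : p * k = c := hce
          exact hpc (hce' ▸ dvd_mul_right p k)
        exact hpc (h ⟨c, hcmem⟩ (hreach.trans hadj2.reachable))
      · -- v ∣ u
        exact dvd_trans (hv ▸ Dvd.intro k rfl) hq
    obtain ⟨k', hk'⟩ := hdvd
    have hk'd : d ≤ k' := by
      have := hub.1
      rw [hk'] at this
      exact Nat.le_of_mul_le_mul_left this (by positivity)
    have hk't : k' ≤ t := by
      have := hub.2
      rw [hk'] at this
      exact Nat.le_of_mul_le_mul_left this (by positivity)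
    have hk'mem : p * k' ∈ Finset.Icc (p * d) (p * t) :=
      Finset.mem_Icc.mpr ⟨Nat.mul_le_mul_left p hk'd, Nat.mul_le_mul_left p hk't⟩
    have hkne : k ≠ k' := by
      intro hkk
      exact hune (by rw [hk', hv, hkk])
    have hdd : k ∣ k' ∨ k' ∣ k := by
      rcases hadj.2 with hq | hq
      · right
        rw [hk', hv] at hq
        exact (mul_dvd_mul_iff_left (by positivity : (p:ℕ)^2 ≠ 0)).mp hq
      · left
        rw [hk', hv] at hq
        exact (mul_dvd_mul_iff_left (by positivity : (p:ℕ)^2 ≠ 0)).mp hq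
    have hadj3 : G1.Adj ⟨p * k, hk⟩ ⟨p * k', hk'mem⟩ := by
      refine ⟨fun hce => hkne (Nat.eq_of_mul_eq_mul_left hp0 hce), ?_⟩
      rcases hdd with hq | hq
      · exact Or.inl (mul_dvd_mul_left p hq)
      · exact Or.inr (mul_dvd_mul_left p hq)
    exact ⟨k', hk'mem, hk', hreach.trans hadj3.reachable⟩
end

section
/- For all integers 1 ≤ k ≤ n, the number of primitive subsets of {k, k+1, …, n} of maximum possible size (among primitive subsets of {k, …, n}) is at least the number of primitive subsets of {k+1, …, n} of maximum possible size (among primitive subsets of {k+1, …, n}), and at most twice that number. -/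
/-- A finite set of positive integers is primitive if no element divides another. -/
def IsPrimitive (S : Finset ℕ) : Prop := ∀ a ∈ S, ∀ b ∈ S, a ∣ b → a = b

/-- The maximum possible size of a primitive subset of the finite set `T`. -/
noncomputable def maxPrimSize (T : Finset ℕ) : ℕ :=
  sSup {k : ℕ | ∃ S : Finset ℕ, S ⊆ T ∧ IsPrimitive S ∧ S.card = k}

/-- The number of primitive subsets of `T` of maximum possible size. -/
noncomputable def maxPrimCount (T : Finset ℕ) : ℕ :=
  Nat.card {S : Finset ℕ // S ⊆ T ∧ IsPrimitive S ∧ S.card = maxPrimSize T}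

lemma bddAux (T : Finset ℕ) :
    BddAbove {k : ℕ | ∃ S : Finset ℕ, S ⊆ T ∧ IsPrimitive S ∧ S.card = k} :=
  ⟨T.card, fun _ ⟨_, hS, _, hc⟩ => hc ▸ Finset.card_le_card hS⟩

lemma exists_maxAux (T : Finset ℕ) :
    ∃ S : Finset ℕ, S ⊆ T ∧ IsPrimitive S ∧ S.card = maxPrimSize T := by
  have : maxPrimSize T ∈ {k : ℕ | ∃ S : Finset ℕ, S ⊆ T ∧ IsPrimitive S ∧ S.card = k} :=
    Nat.sSup_mem ⟨0, ∅, by simp [IsPrimitive]⟩ (bddAux T)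
  exact this

lemma card_le_maxAux {T S : Finset ℕ} (hS : S ⊆ T) (hP : IsPrimitive S) :
    S.card ≤ maxPrimSize T :=
  le_csSup (bddAux T) ⟨S, hS, hP, rfl⟩

lemma finiteAux (T : Finset ℕ) (P : Finset ℕ → Prop) :
    Finite {S : Finset ℕ // S ⊆ T ∧ P S} := by
  apply Finite.of_injective
    (β := {S : Finset ℕ // S ∈ T.powerset})
    (fun X => ⟨X.1, Finset.mem_powerset.2 X.2.1⟩)
  intro a b h
  simp only [Subtype.mk.injEq] at h
  exact Subtype.ext h

lemma prim_subsetAux {S S' : Finset ℕ} (hP : IsPrimitive S) (h : S' ⊆ S) :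
    IsPrimitive S' := fun a ha b hb hab => hP a (h ha) b (h hb) hab

lemma dvd_two_mulAux {k d : ℕ} (hk : 1 ≤ k) (hd : d ∣ 2 * k) (h1 : k ≤ d) (h2 : d ≠ k) :
    d = 2 * k := by
  obtain ⟨c, hc⟩ := hd
  rcases Nat.lt_or_ge c 2 with h | h
  · interval_cases c <;> omega
  · have : d * 2 ≤ d * c := Nat.mul_le_mul_left d h
    omega

/-- The number of maximum-size primitive subsets of `{k, …, n}` is at least the number
of maximum-size primitive subsets of `{k+1, …, n}` and at most twice that number. -/
theorem maxPrimCount_step (k n : ℕ) (hk : 1 ≤ k) (hkn : k ≤ n) :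
    maxPrimCount (Finset.Icc (k + 1) n) ≤ maxPrimCount (Finset.Icc k n) ∧
    maxPrimCount (Finset.Icc k n) ≤ 2 * maxPrimCount (Finset.Icc (k + 1) n) := by
  set T' := Finset.Icc (k + 1) n with hT'
  set T := Finset.Icc k n with hT
  set m' := maxPrimSize T' with hm'
  set m := maxPrimSize T with hm
  have hTT : T' ⊆ T := Finset.Icc_subset_Icc (by omega) le_rfl
  have hkT : k ∈ T := Finset.mem_Icc.2 ⟨le_rfl, hkn⟩
  have hsub : ∀ S : Finset ℕ, S ⊆ T → k ∉ S → S ⊆ T' := by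
    intro S hS hkS x hx
    have hx' := Finset.mem_Icc.1 (hS hx)
    have : x ≠ k := fun h => hkS (h ▸ hx)
    exact Finset.mem_Icc.2 ⟨by omega, hx'.2⟩
  haveI finT : Finite {S : Finset ℕ // S ⊆ T ∧ IsPrimitive S ∧ S.card = m} :=
    finiteAux T _
  haveI finT' : Finite {S : Finset ℕ // S ⊆ T' ∧ IsPrimitive S ∧ S.card = m'} :=
    finiteAux T' _
  by_cases hn : n < 2 * k
  · -- Case A: k divides nothing in T'
    have nomult : ∀ b ∈ T', ¬ k ∣ b := by
      intro b hb hdvd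
      have hb' := Finset.mem_Icc.1 hb
      obtain ⟨c, rfl⟩ := hdvd
      rcases Nat.lt_or_ge c 2 with h | h
      · interval_cases c <;> omega
      · have : k * 2 ≤ k * c := Nat.mul_le_mul_left k h
        omega
    -- inserting k into a primitive subset of T' stays primitive
    have prim_ins : ∀ S : Finset ℕ, S ⊆ T' → IsPrimitive S → IsPrimitive (insert k S) := by
      intro S hS hP a ha b hb hab
      rcases Finset.mem_insert.1 ha with rfl | ha'
      · rcases Finset.mem_insert.1 hb with rfl | hb'
        · rfl
        · exact absurd hab (nomult b (hS hb'))
      · rcases Finset.mem_insert.1 hb with rfl | hb'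
        · have h1 := (Finset.mem_Icc.1 (hS ha')).1
          have := Nat.le_of_dvd (by omega) hab
          omega
        · exact hP a ha' b hb' hab
    have hknotS : ∀ S : Finset ℕ, S ⊆ T' → k ∉ S := by
      intro S hS h
      have := (Finset.mem_Icc.1 (hS h)).1
      omega
    have hmm : m = m' + 1 := by
      apply le_antisymm
      · obtain ⟨S, hS, hP, hc⟩ := exists_maxAux T
        by_cases hkS : k ∈ S
        · have h1 : S.erase k ⊆ T' := by
            intro x hx
            have hxk := Finset.ne_of_mem_erase hx
            have hx' := Finset.mem_Icc.1 (hS (Finset.mem_of_mem_erase hx))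
            exact Finset.mem_Icc.2 ⟨by omega, hx'.2⟩
          have h2 : (S.erase k).card ≤ m' :=
            card_le_maxAux h1 (prim_subsetAux hP (Finset.erase_subset _ _))
          have h3 : (S.erase k).card = S.card - 1 := Finset.card_erase_of_mem hkS
          have h4 : 1 ≤ S.card := Finset.card_pos.2 ⟨k, hkS⟩
          omega
        · have : S.card ≤ m' := card_le_maxAux (hsub S hS hkS) hP
          omega
      · obtain ⟨S', hS', hP', hc'⟩ := exists_maxAux T'
        have h1 : insert k S' ⊆ T := by
          intro x hx
          rcases Finset.mem_insert.1 hx with rfl | hx'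
          · exact hkT
          · exact hTT (hS' hx')
        have h2 : (insert k S').card = m' + 1 := by
          rw [Finset.card_insert_of_notMem (hknotS S' hS'), hc']
        have := card_le_maxAux h1 (prim_ins S' hS' hP')
        omega
    have hle1 : maxPrimCount T' ≤ maxPrimCount T := by
      apply Nat.card_le_card_of_injective
        (f := fun X : {S : Finset ℕ // S ⊆ T' ∧ IsPrimitive S ∧ S.card = m'} =>
          (⟨insert k X.1, by
            intro x hx
            rcases Finset.mem_insert.1 hx with rfl | hx'
            · exact hkT
            · exact hTT (X.2.1 hx'),
            prim_ins X.1 X.2.1 X.2.2.1, by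
            rw [Finset.card_insert_of_notMem (hknotS X.1 X.2.1), X.2.2.2, hmm]⟩ :
            {S : Finset ℕ // S ⊆ T ∧ IsPrimitive S ∧ S.card = m}))
      intro X Y h
      simp only [Subtype.mk.injEq] at h
      apply Subtype.ext
      have := congrArg (fun s : Finset ℕ => s.erase k) h
      simpa [Finset.erase_insert (hknotS X.1 X.2.1),
        Finset.erase_insert (hknotS Y.1 Y.2.1)] using this
    have hle2 : maxPrimCount T ≤ maxPrimCount T' := by
      have hmem : ∀ X : {S : Finset ℕ // S ⊆ T ∧ IsPrimitive S ∧ S.card = m}, k ∈ X.1 := by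
        intro X
        by_contra hkS
        have : X.1.card ≤ m' := card_le_maxAux (hsub X.1 X.2.1 hkS) X.2.2.1
        omega
      apply Nat.card_le_card_of_injective
        (f := fun X : {S : Finset ℕ // S ⊆ T ∧ IsPrimitive S ∧ S.card = m} =>
          (⟨X.1.erase k, by
            intro x hx
            have hxk := Finset.ne_of_mem_erase hx
            have hx' := Finset.mem_Icc.1 (X.2.1 (Finset.mem_of_mem_erase hx))
            exact Finset.mem_Icc.2 ⟨by omega, hx'.2⟩,
            prim_subsetAux X.2.2.1 (Finset.erase_subset _ _), by
            rw [Finset.card_erase_of_mem (hmem X), X.2.2.2, hmm]; omega⟩ :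
            {S : Finset ℕ // S ⊆ T' ∧ IsPrimitive S ∧ S.card = m'}))
      intro X Y h
      simp only [Subtype.mk.injEq] at h
      apply Subtype.ext
      have := congrArg (insert k) h
      simpa [Finset.insert_erase (hmem X), Finset.insert_erase (hmem Y)] using this
    exact ⟨hle1, by omega⟩
  · -- Case B: 2k ≤ n
    push_neg at hn
    have h2kT' : 2 * k ∈ T' := Finset.mem_Icc.2 ⟨by omega, hn⟩
    -- swapping k for 2k
    have swap_prop : ∀ S : Finset ℕ, S ⊆ T → IsPrimitive S → k ∈ S →
        (insert (2 * k) (S.erase k) ⊆ T' ∧ IsPrimitive (insert (2 * k) (S.erase k)) ∧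
          (insert (2 * k) (S.erase k)).card = S.card ∧ 2 * k ∉ S) := by
      intro S hS hP hkS
      have h2knS : 2 * k ∉ S := by
        intro h
        have := hP k hkS (2 * k) h (dvd_mul_left k 2)
        omega
      have heraseT' : S.erase k ⊆ T' := by
        intro x hx
        have hxk := Finset.ne_of_mem_erase hx
        have hx' := Finset.mem_Icc.1 (hS (Finset.mem_of_mem_erase hx))
        exact Finset.mem_Icc.2 ⟨by omega, hx'.2⟩
      refine ⟨?_, ?_, ?_, h2knS⟩
      · intro x hx
        rcases Finset.mem_insert.1 hx with rfl | hx'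
        · exact h2kT'
        · exact heraseT' hx'
      · intro a ha b hb hab
        rcases Finset.mem_insert.1 ha with rfl | ha'
        · rcases Finset.mem_insert.1 hb with rfl | hb'
          · rfl
          · -- 2k ∣ b, b ∈ S.erase k
            have hbS := Finset.mem_of_mem_erase hb'
            have hkb : k ∣ b := (dvd_mul_left k 2).trans hab
            have := hP k hkS b hbS hkb
            exact absurd this.symm (Finset.ne_of_mem_erase hb')
        · rcases Finset.mem_insert.1 hb with rfl | hb'
          · -- a ∣ 2k, a ∈ S.erase k
            have haS := Finset.mem_of_mem_erase ha'
            have hak : k ≤ a := (Finset.mem_Icc.1 (hS haS)).1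
            exact dvd_two_mulAux hk hab hak (Finset.ne_of_mem_erase ha')
          · exact hP a (Finset.mem_of_mem_erase ha') b (Finset.mem_of_mem_erase hb') hab
      · have h1 : 2 * k ∉ S.erase k := fun h => h2knS (Finset.mem_of_mem_erase h)
        rw [Finset.card_insert_of_notMem h1, Finset.card_erase_of_mem hkS]
        have : 1 ≤ S.card := Finset.card_pos.2 ⟨k, hkS⟩
        omega
    have hmm : m = m' := by
      apply le_antisymm
      · obtain ⟨S, hS, hP, hc⟩ := exists_maxAux T
        by_cases hkS : k ∈ S
        · obtain ⟨ha, hb, hc', _⟩ := swap_prop S hS hP hkS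
          have := card_le_maxAux ha hb
          omega
        · have := card_le_maxAux (hsub S hS hkS) hP
          omega
      · obtain ⟨S', hS', hP', hc'⟩ := exists_maxAux T'
        have := card_le_maxAux (hS'.trans hTT) hP'
        omega
    have hle1 : maxPrimCount T' ≤ maxPrimCount T := by
      apply Nat.card_le_card_of_injective
        (f := fun X : {S : Finset ℕ // S ⊆ T' ∧ IsPrimitive S ∧ S.card = m'} =>
          (⟨X.1, X.2.1.trans hTT, X.2.2.1, by rw [X.2.2.2, hmm]⟩ :
            {S : Finset ℕ // S ⊆ T ∧ IsPrimitive S ∧ S.card = m}))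
      intro X Y h
      simp only [Subtype.mk.injEq] at h
      exact Subtype.ext h
    have hle2 : maxPrimCount T ≤ 2 * maxPrimCount T' := by
      have hinj : Nat.card {S : Finset ℕ // S ⊆ T ∧ IsPrimitive S ∧ S.card = m} ≤
          Nat.card ({S : Finset ℕ // S ⊆ T' ∧ IsPrimitive S ∧ S.card = m'} × Bool) := by
        apply Nat.card_le_card_of_injective
          (f := fun X : {S : Finset ℕ // S ⊆ T ∧ IsPrimitive S ∧ S.card = m} =>
            if h : k ∈ X.1 then
              ((⟨insert (2 * k) (X.1.erase k),
                (swap_prop X.1 X.2.1 X.2.2.1 h).1,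
                (swap_prop X.1 X.2.1 X.2.2.1 h).2.1, by
                rw [(swap_prop X.1 X.2.1 X.2.2.1 h).2.2.1, X.2.2.2, hmm]⟩ :
                {S : Finset ℕ // S ⊆ T' ∧ IsPrimitive S ∧ S.card = m'}), true)
            else
              ((⟨X.1, hsub X.1 X.2.1 h, X.2.2.1, by rw [X.2.2.2, hmm]⟩ :
                {S : Finset ℕ // S ⊆ T' ∧ IsPrimitive S ∧ S.card = m'}), false))
        intro X Y h
        simp only at h
        by_cases hX : k ∈ X.1 <;> by_cases hY : k ∈ Y.1
        · rw [dif_pos hX, dif_pos hY] at h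
          have h1 : insert (2 * k) (X.1.erase k) = insert (2 * k) (Y.1.erase k) :=
            congrArg (fun p => (Prod.fst p).1) h
          apply Subtype.ext
          have h2kX : 2 * k ∉ X.1.erase k :=
            fun hh => (swap_prop X.1 X.2.1 X.2.2.1 hX).2.2.2 (Finset.mem_of_mem_erase hh)
          have h2kY : 2 * k ∉ Y.1.erase k :=
            fun hh => (swap_prop Y.1 Y.2.1 Y.2.2.1 hY).2.2.2 (Finset.mem_of_mem_erase hh)
          have herase : X.1.erase k = Y.1.erase k := by
            have := congrArg (fun s : Finset ℕ => s.erase (2 * k)) h1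
            simpa [Finset.erase_insert h2kX, Finset.erase_insert h2kY] using this
          have := congrArg (insert k) herase
          simpa [Finset.insert_erase hX, Finset.insert_erase hY] using this
        · rw [dif_pos hX, dif_neg hY] at h
          exact absurd (congrArg Prod.snd h) (by simp)
        · rw [dif_neg hX, dif_pos hY] at h
          exact absurd (congrArg Prod.snd h) (by simp)
        · rw [dif_neg hX, dif_neg hY] at h
          exact Subtype.ext (congrArg (fun p => (Prod.fst p).1) h)
      have hcard : Nat.card ({S : Finset ℕ // S ⊆ T' ∧ IsPrimitive S ∧ S.card = m'} × Bool) =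
          2 * maxPrimCount T' := by
        rw [Nat.card_prod]
        have : Nat.card Bool = 2 := by simp [Nat.card_eq_fintype_card]
        rw [this, maxPrimCount]
        ring
      calc maxPrimCount T = Nat.card {S : Finset ℕ // S ⊆ T ∧ IsPrimitive S ∧ S.card = m} := rfl
        _ ≤ _ := hinj
        _ = 2 * maxPrimCount T' := hcard
    exact ⟨hle1, hle2⟩
end

section
/- For all integers 1 ≤ k ≤ n, the number of maximal primitive subsets of {k, k+1, …, n} is at least the number of maximal primitive subsets of {k+1, …, n}, and at most twice that number. Here a primitive subset S of an interval I of integers is maximal if for every j in I \ S the set S ∪ {j} is not primitive. -/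
noncomputable def maximalPrimCount (T : Finset ℕ) : ℕ :=
  Nat.card {S : Finset ℕ // S ⊆ T ∧ IsPrimitive S ∧
    ∀ j ∈ T, j ∉ S → ¬ IsPrimitive (insert j S)}

def IsMaxPrim (T S : Finset ℕ) : Prop :=
  S ⊆ T ∧ IsPrimitive S ∧ ∀ j ∈ T, j ∉ S → ¬ IsPrimitive (insert j S)

lemma IsPrimitive.mono' {S S' : Finset ℕ} (h : S ⊆ S') (hp : IsPrimitive S') : IsPrimitive S :=
  fun a ha b hb hd => hp a (h ha) b (h hb) hd

lemma finite_maxprim (T : Finset ℕ) : Finite {S : Finset ℕ // IsMaxPrim T S} :=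
  Finite.of_injective
    (fun S => (⟨S.1, Finset.mem_powerset.2 S.2.1⟩ : {S // S ∈ T.powerset}))
    (fun a b h => by simpa [Subtype.ext_iff] using h)

lemma exists_min_dvd (M : Finset ℕ) (hpos : ∀ m ∈ M, 0 < m) :
    ∀ j ∈ M, ∃ a ∈ M, (∀ m' ∈ M, m' ∣ a → m' = a) ∧ a ∣ j := by
  intro j
  induction j using Nat.strong_induction_on with
  | _ j ih =>
    intro hj
    by_cases h : ∀ m' ∈ M, m' ∣ j → m' = j
    · exact ⟨j, hj, h, dvd_refl j⟩
    · push_neg at h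
      obtain ⟨m', hm', hd, hne⟩ := h
      have hlt : m' < j := lt_of_le_of_ne (Nat.le_of_dvd (hpos j hj) hd) hne
      obtain ⟨a, ha, hmin, had⟩ := ih m' hlt hm'
      exact ⟨a, ha, hmin, had.trans hd⟩

lemma maxprim_of_notMem {k : ℕ} {T' S : Finset ℕ}
    (hS : IsMaxPrim (insert k T') S) (hkS : k ∉ S) : IsMaxPrim T' S := by
  obtain ⟨hsub, hp, hmax⟩ := hS
  refine ⟨?_, hp, fun j hj hjS => hmax j (Finset.mem_insert_of_mem hj) hjS⟩
  intro x hx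
  rcases Finset.mem_insert.1 (hsub hx) with rfl | h
  · exact absurd hx hkS
  · exact h

lemma phi_spec (k : ℕ) (T' : Finset ℕ) (hk : k ∉ T') (hk0 : 0 < k)
    (hnd : ∀ j ∈ T', ¬ j ∣ k) (hpos : ∀ j ∈ T', 0 < j)
    (S : Finset ℕ) (hS : IsMaxPrim (insert k T') S) (hkS : k ∈ S) :
    ∃ S' : Finset ℕ, IsMaxPrim T' S' ∧ S'.filter (fun x => ¬ k ∣ x) = S.erase k := by
  classical
  obtain ⟨hsub, hp, hmax⟩ := hS
  set S₀ := S.erase k with hS₀def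
  have hS₀S : S₀ ⊆ S := Finset.erase_subset _ _
  have hS₀sub : S₀ ⊆ T' := by
    intro x hx
    have hx' : x ∈ S := hS₀S hx
    have hxk : x ≠ k := Finset.ne_of_mem_erase hx
    rcases Finset.mem_insert.1 (hsub hx') with rfl | h
    · exact absurd rfl hxk
    · exact h
  have hp₀ : IsPrimitive S₀ := IsPrimitive.mono' hS₀S hp
  have hmemS : ∀ x ∈ S, x = k ∨ x ∈ S₀ := by
    intro x hx
    by_cases hxk : x = k
    · exact Or.inl hxk
    · exact Or.inr (Finset.mem_erase.2 ⟨hxk, hx⟩)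
  set M := T'.filter (fun j => j ∉ S₀ ∧ IsPrimitive (insert j S₀)) with hMdef
  have hMsub : M ⊆ T' := Finset.filter_subset _ _
  have hMspec : ∀ m ∈ M, m ∈ T' ∧ m ∉ S₀ ∧ IsPrimitive (insert m S₀) := by
    intro m hm
    rw [hMdef, Finset.mem_filter] at hm
    exact ⟨hm.1, hm.2.1, hm.2.2⟩
  -- every element of M is a multiple of k
  have hMk : ∀ m ∈ M, k ∣ m := by
    intro m hm
    obtain ⟨hmT', hmS₀, hmp⟩ := hMspec m hm
    have hmk : m ≠ k := fun he => hk (he ▸ hmT')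
    have hmS : m ∉ S := fun h => (hmemS m h).elim hmk hmS₀
    have hnp : ¬ IsPrimitive (insert m S) := hmax m (Finset.mem_insert_of_mem hmT') hmS
    by_contra hkm
    apply hnp
    intro a ha b hb hd
    have hamem : a = m ∨ a = k ∨ a ∈ S₀ := by
      rcases Finset.mem_insert.1 ha with rfl | ha'
      · exact Or.inl rfl
      · exact Or.inr (hmemS a ha')
    have hbmem : b = m ∨ b = k ∨ b ∈ S₀ := by
      rcases Finset.mem_insert.1 hb with rfl | hb'
      · exact Or.inl rfl
      · exact Or.inr (hmemS b hb')
    rcases hamem with rfl | rfl | haS₀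
    · rcases hbmem with rfl | rfl | hbS₀
      · rfl
      · exact absurd hd (hnd a hmT')
      · exact hmp a (Finset.mem_insert_self _ _) b (Finset.mem_insert_of_mem hbS₀) hd
    · rcases hbmem with rfl | rfl | hbS₀
      · exact absurd hd hkm
      · rfl
      · exact hp a hkS b (hS₀S hbS₀) hd
    · rcases hbmem with rfl | rfl | hbS₀
      · exact hmp a (Finset.mem_insert_of_mem haS₀) b (Finset.mem_insert_self _ _) hd
      · exact absurd hd (hnd a (hS₀sub haS₀))
      · exact hp₀ a haS₀ b hbS₀ hd
  set Amin := M.filter (fun m => ∀ m' ∈ M, m' ∣ m → m' = m) with hAmindef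
  have hAminM : Amin ⊆ M := Finset.filter_subset _ _
  have hAminspec : ∀ a ∈ Amin, a ∈ M ∧ ∀ m' ∈ M, m' ∣ a → m' = a := by
    intro a ha
    rw [hAmindef, Finset.mem_filter] at ha
    exact ha
  have hmin : ∀ j ∈ M, ∃ a ∈ Amin, a ∣ j := by
    intro j hj
    obtain ⟨a, haM, hamin, had⟩ := exists_min_dvd M (fun m hm => hpos m (hMsub hm)) j hj
    exact ⟨a, by rw [hAmindef]; exact Finset.mem_filter.2 ⟨haM, hamin⟩, had⟩
  refine ⟨S₀ ∪ Amin, ⟨?_, ?_, ?_⟩, ?_⟩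
  · exact Finset.union_subset hS₀sub (hAminM.trans hMsub)
  · -- primitivity
    intro a ha b hb hd
    rcases Finset.mem_union.1 ha with haS₀ | haA
    · rcases Finset.mem_union.1 hb with hbS₀ | hbA
      · exact hp₀ a haS₀ b hbS₀ hd
      · exact (hMspec b (hAminM hbA)).2.2 a (Finset.mem_insert_of_mem haS₀)
          b (Finset.mem_insert_self _ _) hd
    · rcases Finset.mem_union.1 hb with hbS₀ | hbA
      · exact (hMspec a (hAminM haA)).2.2 a (Finset.mem_insert_self _ _)
          b (Finset.mem_insert_of_mem hbS₀) hd
      · exact (hAminspec b hbA).2 a (hAminM haA) hd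
  · -- maximality
    intro j hjT' hjS' hprim
    have hj₀ : IsPrimitive (insert j S₀) :=
      IsPrimitive.mono' (Finset.insert_subset_insert _ Finset.subset_union_left) hprim
    have hjS₀ : j ∉ S₀ := fun h => hjS' (Finset.mem_union_left _ h)
    have hjM : j ∈ M := by
      rw [hMdef]; exact Finset.mem_filter.2 ⟨hjT', hjS₀, hj₀⟩
    obtain ⟨a, haA, had⟩ := hmin j hjM
    have : a = j := hprim a (Finset.mem_insert_of_mem (Finset.mem_union_right _ haA))
      j (Finset.mem_insert_self _ _) had
    exact hjS' (Finset.mem_union_right _ (this ▸ haA))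
  · -- filter property
    ext x
    simp only [Finset.mem_filter, Finset.mem_union]
    constructor
    · rintro ⟨hx | hx, hdvd⟩
      · exact hx
      · exact absurd (hMk x (hAminM hx)) hdvd
    · intro hx
      refine ⟨Or.inl hx, fun hdvd => ?_⟩
      have := hp k hkS x (hS₀S hx) hdvd
      exact Finset.ne_of_mem_erase hx this.symm

lemma count_le (k : ℕ) (T' : Finset ℕ) (hk : k ∉ T') :
    Nat.card {S : Finset ℕ // IsMaxPrim T' S} ≤
      Nat.card {S : Finset ℕ // IsMaxPrim (insert k T') S} := by
  classical
  haveI := finite_maxprim (insert k T')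
  have hmax1 : ∀ S : Finset ℕ, IsMaxPrim T' S → IsPrimitive (insert k S) →
      IsMaxPrim (insert k T') (insert k S) := by
    rintro S ⟨hsub, hp, hmax⟩ hpk
    refine ⟨Finset.insert_subset_insert _ hsub, hpk, ?_⟩
    intro j hj hjS hcontra
    rcases Finset.mem_insert.1 hj with rfl | hj'
    · exact hjS (Finset.mem_insert_self _ _)
    · have hjS' : j ∉ S := fun h => hjS (Finset.mem_insert_of_mem h)
      exact hmax j hj' hjS'
        (IsPrimitive.mono' (Finset.insert_subset_insert _ (Finset.subset_insert _ _)) hcontra)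
  have hmax2 : ∀ S : Finset ℕ, IsMaxPrim T' S → ¬ IsPrimitive (insert k S) →
      IsMaxPrim (insert k T') S := by
    rintro S ⟨hsub, hp, hmax⟩ hpk
    refine ⟨hsub.trans (Finset.subset_insert _ _), hp, ?_⟩
    intro j hj hjS
    rcases Finset.mem_insert.1 hj with rfl | hj'
    · exact hpk
    · exact hmax j hj' hjS
  apply Nat.card_le_card_of_injective
    (f := fun S : {S : Finset ℕ // IsMaxPrim T' S} =>
      if h : IsPrimitive (insert k S.1) then
        (⟨insert k S.1, hmax1 S.1 S.2 h⟩ : {S : Finset ℕ // IsMaxPrim (insert k T') S})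
      else ⟨S.1, hmax2 S.1 S.2 h⟩)
  intro S₁ S₂ heq
  have hk1 : k ∉ S₁.1 := fun h => hk (S₁.2.1 h)
  have hk2 : k ∉ S₂.1 := fun h => hk (S₂.2.1 h)
  dsimp only at heq
  by_cases h1 : IsPrimitive (insert k S₁.1) <;> by_cases h2 : IsPrimitive (insert k S₂.1)
  · rw [dif_pos h1, dif_pos h2] at heq
    have hv : insert k S₁.1 = insert k S₂.1 := congrArg Subtype.val heq
    apply Subtype.ext
    rw [← Finset.erase_insert hk1, ← Finset.erase_insert hk2, hv]
  · rw [dif_pos h1, dif_neg h2] at heq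
    have hv : insert k S₁.1 = S₂.1 := congrArg Subtype.val heq
    exact absurd (hv ▸ Finset.mem_insert_self k S₁.1) hk2
  · rw [dif_neg h1, dif_pos h2] at heq
    have hv : S₁.1 = insert k S₂.1 := congrArg Subtype.val heq
    exact absurd (hv ▸ Finset.mem_insert_self k S₂.1) hk1
  · rw [dif_neg h1, dif_neg h2] at heq
    exact Subtype.ext (Subtype.mk.inj heq)

lemma count_ge (k : ℕ) (T' : Finset ℕ) (hk : k ∉ T') (hk0 : 0 < k)
    (hnd : ∀ j ∈ T', ¬ j ∣ k) (hpos : ∀ j ∈ T', 0 < j) :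
    Nat.card {S : Finset ℕ // IsMaxPrim (insert k T') S} ≤
      2 * Nat.card {S : Finset ℕ // IsMaxPrim T' S} := by
  classical
  haveI := finite_maxprim T'
  have hchoice : ∀ S : {S : Finset ℕ // IsMaxPrim (insert k T') S}, k ∈ S.1 →
      ∃ S' : Finset ℕ, IsMaxPrim T' S' ∧ S'.filter (fun x => ¬ k ∣ x) = S.1.erase k :=
    fun S h => phi_spec k T' hk hk0 hnd hpos S.1 S.2 h
  have key : Nat.card {S : Finset ℕ // IsMaxPrim (insert k T') S} ≤
      Nat.card (Bool × {S : Finset ℕ // IsMaxPrim T' S}) := by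
    apply Nat.card_le_card_of_injective
      (f := fun S : {S : Finset ℕ // IsMaxPrim (insert k T') S} =>
        if h : k ∈ S.1 then
          ((true, ⟨(hchoice S h).choose, (hchoice S h).choose_spec.1⟩) :
            Bool × {S : Finset ℕ // IsMaxPrim T' S})
        else (false, ⟨S.1, maxprim_of_notMem S.2 h⟩))
    intro S₁ S₂ heq
    dsimp only at heq
    by_cases h1 : k ∈ S₁.1 <;> by_cases h2 : k ∈ S₂.1
    · rw [dif_pos h1, dif_pos h2] at heq
      have hv : (hchoice S₁ h1).choose = (hchoice S₂ h2).choose := by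
        have := congrArg Prod.snd heq
        exact congrArg Subtype.val this
      have he : S₁.1.erase k = S₂.1.erase k := by
        rw [← (hchoice S₁ h1).choose_spec.2, ← (hchoice S₂ h2).choose_spec.2, hv]
      apply Subtype.ext
      rw [← Finset.insert_erase h1, ← Finset.insert_erase h2, he]
    · rw [dif_pos h1, dif_neg h2] at heq
      exact absurd (congrArg Prod.fst heq) (by simp)
    · rw [dif_neg h1, dif_pos h2] at heq
      exact absurd (congrArg Prod.fst heq) (by simp)
    · rw [dif_neg h1, dif_neg h2] at heq
      have hv : S₁.1 = S₂.1 := by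
        have h := congrArg Prod.snd heq
        simpa [Subtype.ext_iff] using h
      exact Subtype.ext hv
  calc Nat.card {S : Finset ℕ // IsMaxPrim (insert k T') S} ≤
      Nat.card (Bool × {S : Finset ℕ // IsMaxPrim T' S}) := key
    _ = 2 * Nat.card {S : Finset ℕ // IsMaxPrim T' S} := by
        rw [Nat.card_prod]
        simp [Nat.card_eq_fintype_card]

/-- The number of maximal primitive subsets of `{k, …, n}` is at least the number of
maximal primitive subsets of `{k+1, …, n}` and at most twice that number. -/
theorem maximalPrimCount_step (k n : ℕ) (hk : 1 ≤ k) (hkn : k ≤ n) :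
    maximalPrimCount (Finset.Icc (k + 1) n) ≤ maximalPrimCount (Finset.Icc k n) ∧
    maximalPrimCount (Finset.Icc k n) ≤ 2 * maximalPrimCount (Finset.Icc (k + 1) n) := by
  have hk' : k ∉ Finset.Icc (k + 1) n := by
    simp only [Finset.mem_Icc]
    omega
  have hT : Finset.Icc k n = insert k (Finset.Icc (k + 1) n) := by
    rw [Finset.Icc_add_one_left_eq_Ioc, Finset.Ioc_insert_left hkn]
  have hnd : ∀ j ∈ Finset.Icc (k + 1) n, ¬ j ∣ k := by
    intro j hj hd
    rw [Finset.mem_Icc] at hj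
    have := Nat.le_of_dvd hk hd
    omega
  have hpos : ∀ j ∈ Finset.Icc (k + 1) n, 0 < j := by
    intro j hj
    rw [Finset.mem_Icc] at hj
    omega
  have e : ∀ T : Finset ℕ, maximalPrimCount T = Nat.card {S : Finset ℕ // IsMaxPrim T S} :=
    fun _ => rfl
  rw [e, e, hT]
  exact ⟨count_le k _ hk', count_ge k _ hk' hk hnd hpos⟩
end

section
/- For integers 1 ≤ k < n, let V(k,n) denote the minimum number of vertex-disjoint paths in the divisor graph of {k, k+1, …, n} needed so that every vertex lies on one of the paths. Then |V(k,n) − V(k+1,n)| ≤ 1; moreover, if 2k ≤ n then V(k,n) ≤ V(k+1,n). -/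
/-- The minimum number of vertex-disjoint paths (represented as nonempty duplicate-free
lists of vertices, consecutive vertices adjacent) needed to cover every vertex of `G`. -/
noncomputable def pathCoverNumber {V : Type*} (G : SimpleGraph V) : ℕ :=
  sInf {m : ℕ | ∃ L : Finset (List V), L.card = m ∧
    (∀ l ∈ L, l ≠ [] ∧ l.Chain' G.Adj ∧ l.Nodup) ∧
    (∀ l ∈ L, ∀ l' ∈ L, l ≠ l' → ∀ x ∈ l, x ∉ l') ∧
    (∀ v : V, ∃ l ∈ L, v ∈ l)}

def NAdj (x y : ℕ) : Prop := x ≠ y ∧ (x ∣ y ∨ y ∣ x)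

def IsCover (T : Finset ℕ) (L : Finset (List ℕ)) : Prop :=
  (∀ l ∈ L, l ≠ [] ∧ l.Chain' NAdj ∧ l.Nodup ∧ ∀ x ∈ l, x ∈ T) ∧
  (∀ l ∈ L, ∀ l' ∈ L, l ≠ l' → ∀ x ∈ l, x ∉ l') ∧
  (∀ v ∈ T, ∃ l ∈ L, v ∈ l)

noncomputable def pcn (T : Finset ℕ) : ℕ := sInf {m | ∃ L, IsCover T L ∧ L.card = m}

def toSub (T : Finset ℕ) (l : List ℕ) : List {x : ℕ // x ∈ T} :=
  l.filterMap (fun x => if h : x ∈ T then some ⟨x, h⟩ else none)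

lemma toSub_val {T : Finset ℕ} {l : List ℕ} (h : ∀ x ∈ l, x ∈ T) :
    (toSub T l).map Subtype.val = l := by
  induction l with
  | nil => rfl
  | cons a l ih =>
    have ha : a ∈ T := h a List.mem_cons_self
    have ih' := ih fun x hx => h x (List.mem_cons_of_mem a hx)
    simp only [toSub, List.filterMap_cons, dif_pos ha, List.map_cons]
    rw [show (List.filterMap (fun x => if h : x ∈ T then some (⟨x, h⟩ : {x : ℕ // x ∈ T}) else none) l) = toSub T l from rfl, ih']

lemma mem_toSub {T : Finset ℕ} {l : List ℕ} {x : ℕ} (hx : x ∈ T) (hxl : x ∈ l) :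
    (⟨x, hx⟩ : {x : ℕ // x ∈ T}) ∈ toSub T l := by
  simp only [toSub, List.mem_filterMap]
  exact ⟨x, hxl, by simp [dif_pos hx]⟩

lemma pcn_eq (T : Finset ℕ) : pathCoverNumber (divisorGraph T) = pcn T := by
  unfold pathCoverNumber pcn
  congr 1
  ext m
  constructor
  · rintro ⟨L, hcard, hlists, hdisj, hcov⟩
    have hinj : Function.Injective (List.map (Subtype.val : {x : ℕ // x ∈ T} → ℕ)) :=
      List.map_injective_iff.mpr Subtype.val_injective
    refine ⟨L.image (List.map Subtype.val), ⟨?_, ?_, ?_⟩, ?_⟩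
    · intro l hl
      obtain ⟨l', hl', rfl⟩ := Finset.mem_image.mp hl
      obtain ⟨hne, hch, hnd⟩ := hlists l' hl'
      refine ⟨fun h => hne (List.map_eq_nil_iff.mp h), ?_, hnd.map Subtype.val_injective, ?_⟩
      · unfold List.Chain'; rw [List.isChain_map]; exact hch
      · intro x hx
        obtain ⟨a, _, rfl⟩ := List.mem_map.mp hx
        exact a.2
    · intro l hl l' hl' hne x hx hx'
      obtain ⟨a, haL, rfl⟩ := Finset.mem_image.mp hl
      obtain ⟨b, hbL, rfl⟩ := Finset.mem_image.mp hl'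
      have hab : a ≠ b := fun h => hne (by rw [h])
      obtain ⟨u, hu, hux⟩ := List.mem_map.mp hx
      obtain ⟨v, hv, hvx⟩ := List.mem_map.mp hx'
      have : u = v := Subtype.val_injective (hux.trans hvx.symm)
      exact hdisj a haL b hbL hab u hu (this ▸ hv)
    · intro v hv
      obtain ⟨l, hl, hvl⟩ := hcov ⟨v, hv⟩
      exact ⟨l.map Subtype.val, Finset.mem_image_of_mem _ hl, List.mem_map_of_mem hvl⟩
    · rw [Finset.card_image_of_injective _ hinj]; exact hcard
  · rintro ⟨L, ⟨hlists, hdisj, hcov⟩, hcard⟩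
    have hval : ∀ l ∈ L, (toSub T l).map Subtype.val = l := fun l hl =>
      toSub_val (hlists l hl).2.2.2
    refine ⟨L.image (toSub T), ?_, ?_, ?_, ?_⟩
    · rw [Finset.card_image_of_injOn, hcard]
      intro l hl l' hl' h
      rw [← hval l hl, ← hval l' hl', h]
    · intro l hl
      obtain ⟨a, haL, rfl⟩ := Finset.mem_image.mp hl
      obtain ⟨hne, hch, hnd, _⟩ := hlists a haL
      refine ⟨?_, ?_, ?_⟩
      · intro h
        apply hne
        rw [← hval a haL, h]; rfl
      · have : ((toSub T a).map Subtype.val).Chain' NAdj := by rw [hval a haL]; exact hch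
        unfold List.Chain' at this; rw [List.isChain_map] at this
        exact this
      · have : ((toSub T a).map Subtype.val).Nodup := by rw [hval a haL]; exact hnd
        exact this.of_map _
    · intro l hl l' hl' hne x hx hx'
      obtain ⟨a, haL, rfl⟩ := Finset.mem_image.mp hl
      obtain ⟨b, hbL, rfl⟩ := Finset.mem_image.mp hl'
      have hab : a ≠ b := fun h => hne (by rw [h])
      have hxa : (x : ℕ) ∈ a := by
        rw [← hval a haL]; exact List.mem_map_of_mem hx
      have hxb : (x : ℕ) ∈ b := by
        rw [← hval b hbL]; exact List.mem_map_of_mem hx'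
      exact hdisj a haL b hbL hab x hxa hxb
    · intro v
      obtain ⟨l, hl, hvl⟩ := hcov v.1 v.2
      refine ⟨toSub T l, Finset.mem_image_of_mem _ hl, ?_⟩
      have := mem_toSub v.2 hvl
      simpa using this

lemma pcn_le {T : Finset ℕ} {L : Finset (List ℕ)} (h : IsCover T L) : pcn T ≤ L.card :=
  Nat.sInf_le ⟨L, h, rfl⟩

lemma exists_optimal (T : Finset ℕ) : ∃ L, IsCover T L ∧ L.card = pcn T := by
  have hne : {m | ∃ L, IsCover T L ∧ L.card = m}.Nonempty := by
    refine ⟨(T.image fun x => [x]).card, T.image (fun x => [x]), ⟨?_, ?_, ?_⟩, rfl⟩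
    · intro l hl
      obtain ⟨x, hx, rfl⟩ := Finset.mem_image.mp hl
      exact ⟨by simp, List.isChain_singleton _, by simp, by simpa using hx⟩
    · intro l hl l' hl' hne x hx hx'
      obtain ⟨a, _, rfl⟩ := Finset.mem_image.mp hl
      obtain ⟨b, _, rfl⟩ := Finset.mem_image.mp hl'
      simp only [List.mem_singleton] at hx hx'
      subst hx; subst hx'; exact hne rfl
    · intro v hv
      exact ⟨[v], Finset.mem_image_of_mem _ hv, by simp⟩
  exact Nat.sInf_mem hne

-- In a cover of Icc (k+1) n, no list contains k.
lemma k_not_mem {k n : ℕ} {L : Finset (List ℕ)} (h : IsCover (Finset.Icc (k+1) n) L)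
    {l : List ℕ} (hl : l ∈ L) : k ∉ l := by
  intro hkl
  have := (h.1 l hl).2.2.2 k hkl
  rw [Finset.mem_Icc] at this
  omega

/-- Adding the singleton path `[k]`. -/
lemma pcn_le_succ (k n : ℕ) :
    pcn (Finset.Icc k n) ≤ pcn (Finset.Icc (k+1) n) + 1 := by
  obtain ⟨L, ⟨hl, hd, hc⟩, hcard⟩ := exists_optimal (Finset.Icc (k+1) n)
  by_cases hkn : k ≤ n
  swap
  · -- Icc k n is empty; the empty cover works
    refine le_trans (pcn_le (T := Finset.Icc k n) (L := ∅) ⟨?_, ?_, ?_⟩) (by simp)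
    · simp
    · simp
    · intro v hv; rw [Finset.mem_Icc] at hv; omega
  have hkmem : ∀ l ∈ L, k ∉ l := fun l hl' => k_not_mem ⟨hl, hd, hc⟩ hl'
  have hknotin : [k] ∉ L := fun h => hkmem [k] h (by simp)
  have hcov : IsCover (Finset.Icc k n) (insert [k] L) := by
    refine ⟨?_, ?_, ?_⟩
    · intro l hl'
      rcases Finset.mem_insert.mp hl' with rfl | hl'
      · exact ⟨by simp, List.isChain_singleton _, by simp, by simp [Finset.mem_Icc]; omega⟩
      · obtain ⟨h1, h2, h3, h4⟩ := hl l hl'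
        refine ⟨h1, h2, h3, fun x hx => ?_⟩
        have := h4 x hx; rw [Finset.mem_Icc] at *; omega
    · intro l hl' l' hl'' hne x hx hx'
      rcases Finset.mem_insert.mp hl' with rfl | hl' <;>
        rcases Finset.mem_insert.mp hl'' with rfl | hl''
      · exact hne rfl
      · simp only [List.mem_singleton] at hx; exact hkmem l' hl'' (hx ▸ hx')
      · simp only [List.mem_singleton] at hx'; exact hkmem l hl' (hx' ▸ hx)
      · exact hd l hl' l' hl'' hne x hx hx'
    · intro v hv
      rw [Finset.mem_Icc] at hv
      by_cases hvk : v = k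
      · exact ⟨[k], Finset.mem_insert_self _ _, by simp [hvk]⟩
      · obtain ⟨l, hl', hvl⟩ := hc v (by rw [Finset.mem_Icc]; omega)
        exact ⟨l, Finset.mem_insert_of_mem hl', hvl⟩
  calc pcn (Finset.Icc k n) ≤ (insert [k] L).card := pcn_le hcov
    _ = L.card + 1 := Finset.card_insert_of_notMem hknotin
    _ = pcn (Finset.Icc (k+1) n) + 1 := by rw [hcard]

/-- Removing vertex `k` from a cover of `Icc k n`: split its path into two. -/
lemma pcn_succ_le (k n : ℕ) (hkn : k ≤ n) :
    pcn (Finset.Icc (k+1) n) ≤ pcn (Finset.Icc k n) + 1 := by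
  classical
  obtain ⟨L, ⟨hl, hd, hc⟩, hcard⟩ := exists_optimal (Finset.Icc k n)
  obtain ⟨l0, hl0, hkl0⟩ := hc k (by rw [Finset.mem_Icc]; omega)
  obtain ⟨A, B, hAB⟩ := List.append_of_mem hkl0
  obtain ⟨hne0, hch0, hnd0, hmem0⟩ := hl l0 hl0
  rw [hAB] at hch0 hnd0 hmem0
  unfold List.Chain' at hch0; rw [List.isChain_append] at hch0
  have hchA : A.Chain' NAdj := hch0.1
  have hchB : B.Chain' NAdj := (List.isChain_cons.mp hch0.2.1).2
  rw [show (A ++ k :: B) = A ++ [k] ++ B by simp] at hnd0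
  rw [List.nodup_append] at hnd0
  obtain ⟨hndAk, hndB, hdisjAB⟩ := hnd0
  rw [List.nodup_append] at hndAk
  obtain ⟨hndA, _, hdisjAk⟩ := hndAk
  have hkA : k ∉ A := fun h => hdisjAk k h k (by simp) rfl
  have hkB : k ∉ B := fun h => hdisjAB k (by simp) k h rfl
  have hmemA : ∀ x ∈ A, x ∈ Finset.Icc (k+1) n := by
    intro x hx
    have h1 := hmem0 x (by simp [hx])
    have h2 : x ≠ k := fun h => hkA (h ▸ hx)
    rw [Finset.mem_Icc] at *; omega
  have hmemB : ∀ x ∈ B, x ∈ Finset.Icc (k+1) n := by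
    intro x hx
    have h1 := hmem0 x (by simp [hx])
    have h2 : x ≠ k := fun h => hkB (h ▸ hx)
    rw [Finset.mem_Icc] at *; omega
  -- the new cover
  set L' : Finset (List ℕ) :=
    L.erase l0 ∪ ({A, B} : Finset (List ℕ)).filter (· ≠ []) with hL'
  have hmemL' : ∀ l, l ∈ L' ↔ (l ∈ L ∧ l ≠ l0) ∨ ((l = A ∨ l = B) ∧ l ≠ []) := by
    intro l
    simp [hL', Finset.mem_union, Finset.mem_erase, Finset.mem_filter, and_comm]
  -- facts about lists in L'
  have hgood : ∀ l, (l = A ∨ l = B) → l ≠ [] →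
      l ≠ [] ∧ l.Chain' NAdj ∧ l.Nodup ∧ ∀ x ∈ l, x ∈ Finset.Icc (k+1) n := by
    rintro l (rfl | rfl) hne
    · exact ⟨hne, hchA, hndA, hmemA⟩
    · exact ⟨hne, hchB, hndB, hmemB⟩
  have hsubl0 : ∀ l, (l = A ∨ l = B) → ∀ x ∈ l, x ∈ l0 := by
    rintro l (rfl | rfl) x hx <;> rw [hAB] <;> simp [hx]
  have hother : ∀ l ∈ L, l ≠ l0 → ∀ x ∈ l, x ∈ Finset.Icc (k+1) n := by
    intro l hlL hlne x hx
    have h1 := (hl l hlL).2.2.2 x hx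
    have h2 : x ≠ k := fun h => hd l hlL l0 hl0 hlne x hx (h ▸ hkl0)
    rw [Finset.mem_Icc] at *; omega
  have hcov' : IsCover (Finset.Icc (k+1) n) L' := by
    refine ⟨?_, ?_, ?_⟩
    · intro l hl'
      rcases (hmemL' l).mp hl' with ⟨hlL, hlne⟩ | ⟨hAB', hne⟩
      · obtain ⟨h1, h2, h3, _⟩ := hl l hlL
        exact ⟨h1, h2, h3, hother l hlL hlne⟩
      · exact hgood l hAB' hne
    · intro l hl' l' hl'' hne x hx hx'
      rcases (hmemL' l).mp hl' with ⟨hlL, hlne⟩ | ⟨hABl, hnel⟩ <;>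
        rcases (hmemL' l').mp hl'' with ⟨hlL', hlne'⟩ | ⟨hABl', hnel'⟩
      · exact hd l hlL l' hlL' hne x hx hx'
      · exact hd l hlL l0 hl0 hlne x hx (hsubl0 l' hABl' x hx')
      · exact hd l' hlL' l0 hl0 hlne' x hx' (hsubl0 l hABl x hx)
      · -- both among A, B; distinct, so one is A, other is B
        rcases hABl with rfl | rfl <;> rcases hABl' with rfl | rfl
        · exact hne rfl
        · exact hdisjAB x (List.mem_append_left [k] hx) x hx' rfl
        · exact hdisjAB x (List.mem_append_left [k] hx') x hx rfl
        · exact hne rfl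
    · intro v hv
      have hvk : v ≠ k := by rw [Finset.mem_Icc] at hv; omega
      obtain ⟨l, hlL, hvl⟩ := hc v (by rw [Finset.mem_Icc] at *; omega)
      by_cases hlne : l = l0
      · subst hlne
        rw [hAB] at hvl
        rcases List.mem_append.mp hvl with hvA | hvB
        · exact ⟨A, (hmemL' A).mpr (Or.inr ⟨Or.inl rfl, List.ne_nil_of_mem hvA⟩), hvA⟩
        · rcases List.mem_cons.mp hvB with rfl | hvB
          · exact absurd rfl hvk
          · exact ⟨B, (hmemL' B).mpr (Or.inr ⟨Or.inr rfl, List.ne_nil_of_mem hvB⟩), hvB⟩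
      · exact ⟨l, (hmemL' l).mpr (Or.inl ⟨hlL, hlne⟩), hvl⟩
  have hc1 : (L.erase l0).card = L.card - 1 := Finset.card_erase_of_mem hl0
  have hc2 : (({A, B} : Finset (List ℕ)).filter (· ≠ [])).card ≤ 2 :=
    le_trans (Finset.card_filter_le _ _)
      (le_trans (Finset.card_insert_le _ _) (by simp))
  have hpos : 1 ≤ L.card := Finset.card_pos.mpr ⟨l0, hl0⟩
  calc pcn (Finset.Icc (k+1) n) ≤ L'.card := pcn_le hcov'
    _ ≤ (L.erase l0).card + (({A, B} : Finset (List ℕ)).filter (· ≠ [])).card :=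
        Finset.card_union_le _ _
    _ ≤ L.card + 1 := by omega
    _ = pcn (Finset.Icc k n) + 1 := by rw [hcard]

/-- When `2k ≤ n`, vertex `k` can be inserted next to `2k` in its path. -/
lemma pcn_le_of_double (k n : ℕ) (hk : 1 ≤ k) (h2k : 2 * k ≤ n) :
    pcn (Finset.Icc k n) ≤ pcn (Finset.Icc (k+1) n) := by
  classical
  obtain ⟨L, ⟨hl, hd, hc⟩, hcard⟩ := exists_optimal (Finset.Icc (k+1) n)
  have hcov : IsCover (Finset.Icc (k+1) n) L := ⟨hl, hd, hc⟩
  have h2kmem : 2 * k ∈ Finset.Icc (k+1) n := by rw [Finset.mem_Icc]; omega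
  obtain ⟨l0, hl0, h2kl0⟩ := hc (2 * k) h2kmem
  obtain ⟨A, B, hAB⟩ := List.append_of_mem h2kl0
  obtain ⟨hne0, hch0, hnd0, hmem0⟩ := hl l0 hl0
  have hkl0 : k ∉ l0 := k_not_mem hcov hl0
  -- shared continuation: given a new chain perm-equivalent to k :: l0
  suffices H : ∀ newl : List ℕ, newl.Chain' NAdj → newl.Perm (k :: l0) →
      pcn (Finset.Icc k n) ≤ pcn (Finset.Icc (k+1) n) by
    rcases List.eq_nil_or_concat A with rfl | ⟨A', a, rfl⟩
    · -- 2k is the head of l0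
      refine H (k :: l0) ?_ (List.Perm.refl _)
      rw [hAB]
      simp only [List.nil_append]
      unfold List.Chain'; rw [List.isChain_cons_cons]
      refine ⟨⟨by omega, Or.inl ⟨2, by ring⟩⟩, ?_⟩
      rw [hAB] at hch0
      simpa [List.Chain'] using hch0
    · -- l0 = A' ++ [a] ++ 2k :: B with a a multiple of 2k
      rw [List.concat_eq_append] at hAB
      have hchain0 : (A' ++ [a] ++ (2 * k :: B)).Chain' NAdj := by
        rw [← hAB]; exact hch0
      unfold List.Chain' at hchain0; rw [List.isChain_append] at hchain0
      obtain ⟨hchAa, hchkB, hlink⟩ := hchain0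
      have hadj : NAdj a (2 * k) := hlink a (by rw [List.getLast?_concat]; rfl)
        (2 * k) rfl
      have haT : a ∈ Finset.Icc (k+1) n := hmem0 a (by rw [hAB]; simp)
      rw [Finset.mem_Icc] at haT
      have hdvd : 2 * k ∣ a := by
        rcases hadj.2 with h | h
        · exfalso
          obtain ⟨c, hc'⟩ := h
          have hc2 : 2 ≤ c := by
            rcases Nat.lt_or_ge c 2 with hc1 | hc1
            · interval_cases c <;> [omega; (exact absurd (by omega) hadj.1)]
            · exact hc1
          nlinarith
        · exact h
      refine H (A' ++ [a] ++ (k :: 2 * k :: B)) ?_ ?_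
      · unfold List.Chain'; rw [List.isChain_append]
        refine ⟨hchAa, ?_, ?_⟩
        · rw [List.isChain_cons_cons]
          exact ⟨⟨by omega, Or.inl ⟨2, by ring⟩⟩, hchkB⟩
        · intro x hx y hy
          rw [List.getLast?_concat] at hx
          simp only [Option.mem_def, Option.some.injEq] at hx
          simp only [List.head?_cons, Option.mem_def, Option.some.injEq] at hy
          subst hx; subst hy
          exact ⟨by omega, Or.inr (dvd_trans ⟨2, by ring⟩ hdvd)⟩
      · have : ((A' ++ [a]) ++ k :: (2 * k :: B)).Perm (k :: ((A' ++ [a]) ++ 2 * k :: B)) :=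
          List.perm_middle
        rw [← hAB] at this
        simpa using this
  -- the shared continuation
  intro newl hchnew hperm
  have hndnew : newl.Nodup := hperm.nodup_iff.mpr (List.nodup_cons.mpr ⟨hkl0, hnd0⟩)
  have hmemnew : ∀ x, x ∈ newl ↔ x = k ∨ x ∈ l0 := by
    intro x; rw [hperm.mem_iff, List.mem_cons]
  have hnenew : newl ≠ [] := by
    intro h; rw [h] at hperm
    exact absurd hperm.length_eq (by simp)
  have hknew : k ∈ newl := (hmemnew k).mpr (Or.inl rfl)
  have hnotold : newl ∉ L.erase l0 := by
    intro h
    exact k_not_mem hcov (Finset.mem_of_mem_erase h) hknew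
  set L' := insert newl (L.erase l0) with hL'
  have hmemL' : ∀ l, l ∈ L' ↔ l = newl ∨ (l ∈ L ∧ l ≠ l0) := by
    intro l; simp [hL', Finset.mem_insert, Finset.mem_erase, and_comm]
  have hcov' : IsCover (Finset.Icc k n) L' := by
    refine ⟨?_, ?_, ?_⟩
    · intro l hl'
      rcases (hmemL' l).mp hl' with rfl | ⟨hlL, _⟩
      · refine ⟨hnenew, hchnew, hndnew, ?_⟩
        intro x hx
        rcases (hmemnew x).mp hx with rfl | hx'
        · rw [Finset.mem_Icc]; omega
        · have := hmem0 x hx'; rw [Finset.mem_Icc] at *; omega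
      · obtain ⟨h1, h2, h3, h4⟩ := hl l hlL
        refine ⟨h1, h2, h3, fun x hx => ?_⟩
        have := h4 x hx; rw [Finset.mem_Icc] at *; omega
    · intro l hl' l' hl'' hne x hx hx'
      rcases (hmemL' l).mp hl' with rfl | ⟨hlL, hlne⟩ <;>
        rcases (hmemL' l').mp hl'' with rfl | ⟨hlL', hlne'⟩
      · exact hne rfl
      · rcases (hmemnew x).mp hx with rfl | hx0
        · exact k_not_mem hcov hlL' hx'
        · exact hd l0 hl0 l' hlL' (Ne.symm hlne') x hx0 hx'
      · rcases (hmemnew x).mp hx' with rfl | hx0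
        · exact k_not_mem hcov hlL hx
        · exact hd l0 hl0 l hlL (Ne.symm hlne) x hx0 hx
      · exact hd l hlL l' hlL' hne x hx hx'
    · intro v hv
      rw [Finset.mem_Icc] at hv
      by_cases hvk : v = k
      · exact ⟨newl, (hmemL' newl).mpr (Or.inl rfl), (hmemnew v).mpr (Or.inl hvk)⟩
      · obtain ⟨l, hlL, hvl⟩ := hc v (by rw [Finset.mem_Icc]; omega)
        by_cases hlne : l = l0
        · subst hlne
          exact ⟨newl, (hmemL' newl).mpr (Or.inl rfl), (hmemnew v).mpr (Or.inr hvl)⟩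
        · exact ⟨l, (hmemL' l).mpr (Or.inr ⟨hlL, hlne⟩), hvl⟩
  have hpos : 1 ≤ L.card := Finset.card_pos.mpr ⟨l0, hl0⟩
  calc pcn (Finset.Icc k n) ≤ L'.card := pcn_le hcov'
    _ = (L.erase l0).card + 1 := Finset.card_insert_of_notMem hnotold
    _ = L.card := by rw [Finset.card_erase_of_mem hl0]; omega
    _ = pcn (Finset.Icc (k+1) n) := hcard

/-- `V(k,n)`, the minimum number of vertex-disjoint paths covering the divisor graph of
`{k, k+1, …, n}`, satisfies `|V(k,n) − V(k+1,n)| ≤ 1`, and `V(k,n) ≤ V(k+1,n)`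
whenever `2k ≤ n`. -/
theorem path_cover_number_step (k n : ℕ) (hk : 1 ≤ k) (hkn : k < n) :
    |(pathCoverNumber (divisorGraph (Finset.Icc k n)) : ℤ) -
      (pathCoverNumber (divisorGraph (Finset.Icc (k + 1) n)) : ℤ)| ≤ 1 ∧
    (2 * k ≤ n →
      pathCoverNumber (divisorGraph (Finset.Icc k n)) ≤
        pathCoverNumber (divisorGraph (Finset.Icc (k + 1) n))) := by
  rw [pcn_eq, pcn_eq]
  have h1 := pcn_le_succ k n
  have h2 := pcn_succ_le k n (le_of_lt hkn)
  constructor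
  · rw [abs_sub_le_iff]
    constructor <;> [skip; skip] <;> push_cast <;> omega
  · intro h2k
    exact pcn_le_of_double k n hk h2k
end
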